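/- If M ∈ ℝ^{2×2} has det(M_{αα}) = 0 for some α ⊆ {1,2} (i.e., a vanishing principal minor: M₁₁ = 0, M₂₂ = 0, or det M = 0), then M is not LCP stable: in every neighborhood of M there is a matrix not LCP equivalent to M. -/

import Mathlib

open Matrix

/-- Complementary matrix `C_M(α)`: j-th column is `-M_{·j}` if `j ∈ α`, else `e_j`. -/
def compMat {n : ℕ} (M : Matrix (Fin n) (Fin n) ℝ) (α : Finset (Fin n)) :
    Matrix (Fin n) (Fin n) ℝ :=
  fun i j => if j ∈ α then -M i j else (if i = j then 1 else 0)

/-- The orthant `pos C_I(α)`: `x_j ≤ 0` for `j ∈ α`, `x_j ≥ 0` otherwise. -/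
def orthant {n : ℕ} (α : Finset (Fin n)) : Set (Fin n → ℝ) :=
  {x | ∀ j, if j ∈ α then x j ≤ 0 else 0 ≤ x j}

/-- The cone generated by the columns of `A`. -/
def posCone {n : ℕ} (A : Matrix (Fin n) (Fin n) ℝ) : Set (Fin n → ℝ) :=
  {q | ∃ p : Fin n → ℝ, (∀ j, 0 ≤ p j) ∧ q = A.mulVec p}

/-- The piecewise linear map `f_M`, in closed form: on the orthant
`pos C_I(α)` this map equals `x ↦ C_{-M}(α) x`. -/
def fpl {n : ℕ} (M : Matrix (Fin n) (Fin n) ℝ) (x : Fin n → ℝ) : Fin n → ℝ :=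
  fun i => max (x i) 0 - M.mulVec (fun j => max (-x j) 0) i

/-- `z` solves the LCP `(M, q)`: with `w = Mz + q`, one has `z ≥ 0`, `w ≥ 0`, `wᵀz = 0`. -/
def isLCPsol {ι : Type*} [Fintype ι] (M : Matrix ι ι ℝ) (q z : ι → ℝ) : Prop :=
  (∀ i, 0 ≤ z i) ∧ (∀ i, 0 ≤ (M.mulVec z + q) i) ∧ (∀ i, (M.mulVec z + q) i * z i = 0)

/-- The field of sets generated by the orthants (being finitely generated,
it coincides with the generated σ-algebra). -/
def orthField (n : ℕ) : MeasurableSpace (Fin n → ℝ) :=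
  MeasurableSpace.generateFrom {S | ∃ α : Finset (Fin n), S = orthant α}

/-- `ψ` induces a Boolean automorphism `P ↦ ψ⁻¹(P)` of the field generated by the orthants. -/
def inducesBoolAuto {n : ℕ} (ψ : (Fin n → ℝ) ≃ₜ (Fin n → ℝ)) : Prop :=
  ∀ P : Set (Fin n → ℝ),
    @MeasurableSet _ (orthField n) P ↔ @MeasurableSet _ (orthField n) (⇑ψ ⁻¹' P)

/-- LCP equivalence: `f_M = φ ∘ f_N ∘ ψ` for homeomorphisms `φ, ψ`, with `ψ`
inducing a Boolean automorphism on the field generated by the orthants. -/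
def LCPequiv {n : ℕ} (M N : Matrix (Fin n) (Fin n) ℝ) : Prop :=
  ∃ (φ ψ : (Fin n → ℝ) ≃ₜ (Fin n → ℝ)),
    inducesBoolAuto ψ ∧ fpl M = ⇑φ ∘ fpl N ∘ ⇑ψ

lemma fpl_apply (N : Matrix (Fin 2) (Fin 2) ℝ) (x : Fin 2 → ℝ) (i : Fin 2) :
    fpl N x i = max (x i) 0 - (N i 0 * max (-x 0) 0 + N i 1 * max (-x 1) 0) := by
  simp [fpl, Matrix.mulVec, dotProduct, Fin.sum_univ_two]

lemma vec2_ext {f g : Fin 2 → ℝ} (h0 : f 0 = g 0) (h1 : f 1 = g 1) : f = g := by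
  funext i; fin_cases i <;> assumption

lemma infinite_of_seg {M : Matrix (Fin 2) (Fin 2) ℝ} (g : ℝ → Fin 2 → ℝ) (q : Fin 2 → ℝ)
    (hinj : Set.InjOn g (Set.Icc 0 1))
    (hg : ∀ t ∈ Set.Icc (0:ℝ) 1, fpl M (g t) = q) :
    {x | fpl M x = q}.Infinite := by
  have h1 : (Set.Icc (0:ℝ) 1).Infinite := Set.Icc_infinite (by norm_num)
  have : (g '' Set.Icc 0 1).Infinite := h1.image hinj
  exact this.mono (by rintro _ ⟨t, ht, rfl⟩; exact hg t ht)

lemma infinite_fiber (M : Matrix (Fin 2) (Fin 2) ℝ)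
    (h : M 0 0 = 0 ∨ M 1 1 = 0 ∨ M.det = 0) :
    ∃ q, {x | fpl M x = q}.Infinite := by
  rcases h with h | h | h
  · -- M 0 0 = 0
    set c := M 1 0 with hc
    refine ⟨![0, 1 + |c|], infinite_of_seg (fun t => ![-t, 1 + |c| + c * t]) _ ?_ ?_⟩
    · intro s _ t _ hst
      have := congrFun hst 0
      simp at this; linarith
    · intro t ht
      obtain ⟨ht0, ht1⟩ := ht
      have hx1 : 0 ≤ 1 + |c| + c * t := by
        have h1 : c * t ≥ -|c| := by
          rcases le_or_gt 0 c with hc0 | hc0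
          · nlinarith [abs_nonneg c, le_abs_self c]
          · nlinarith [neg_abs_le c]
        linarith
      have m1 : max (-t) 0 = 0 := max_eq_right (by linarith)
      have m2 : max (-(-t)) 0 = t := by rw [neg_neg]; exact max_eq_left ht0
      have m3 : max (1 + |c| + c * t) 0 = 1 + |c| + c * t := max_eq_left hx1
      have m4 : max (-(1 + |c| + c * t)) 0 = 0 := max_eq_right (by linarith)
      refine vec2_ext ?_ ?_ <;>
        rw [fpl_apply] <;>
        simp only [Matrix.cons_val_zero, Matrix.cons_val_one, Matrix.head_cons] <;>
        simp only [m1, m2, m3, m4]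
      · rw [h]; ring
      · rw [← hc]; ring
  · -- M 1 1 = 0
    set b := M 0 1 with hb
    refine ⟨![1 + |b|, 0], infinite_of_seg (fun t => ![1 + |b| + b * t, -t]) _ ?_ ?_⟩
    · intro s _ t _ hst
      have := congrFun hst 1
      simp at this; linarith
    · intro t ht
      obtain ⟨ht0, ht1⟩ := ht
      have hx0 : 0 ≤ 1 + |b| + b * t := by
        have h1 : b * t ≥ -|b| := by
          rcases le_or_gt 0 b with hb0 | hb0
          · nlinarith [abs_nonneg b, le_abs_self b]
          · nlinarith [neg_abs_le b]
        linarith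
      have m1 : max (-t) 0 = 0 := max_eq_right (by linarith)
      have m2 : max (-(-t)) 0 = t := by rw [neg_neg]; exact max_eq_left ht0
      have m3 : max (1 + |b| + b * t) 0 = 1 + |b| + b * t := max_eq_left hx0
      have m4 : max (-(1 + |b| + b * t)) 0 = 0 := max_eq_right (by linarith)
      refine vec2_ext ?_ ?_ <;>
        rw [fpl_apply] <;>
        simp only [Matrix.cons_val_zero, Matrix.cons_val_one, Matrix.head_cons] <;>
        simp only [m1, m2, m3, m4]
      · rw [← hb]; ring
      · rw [h]; ring
  · -- det M = 0
    rw [Matrix.det_fin_two] at h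
    obtain ⟨v, hv0, hker0, hker1⟩ :
        ∃ v : Fin 2 → ℝ, v ≠ 0 ∧ M 0 0 * v 0 + M 0 1 * v 1 = 0 ∧
          M 1 0 * v 0 + M 1 1 * v 1 = 0 := by
      by_cases hcd : M 1 0 = 0 ∧ M 1 1 = 0
      · by_cases hab : M 0 0 = 0 ∧ M 0 1 = 0
        · refine ⟨![1, 0], ?_, ?_, ?_⟩
          · intro hz; have := congrFun hz 0; simp at this
          · simp [hab.1, hab.2]
          · simp [hcd.1, hcd.2]
        · refine ⟨![M 0 1, -(M 0 0)], ?_, ?_, ?_⟩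
          · intro hz
            have h1 := congrFun hz 0
            have h2 := congrFun hz 1
            simp at h1 h2
            exact hab ⟨h2, h1⟩
          · simp only [Matrix.cons_val_zero, Matrix.cons_val_one, Matrix.head_cons]; ring
          · simp [hcd.1, hcd.2]
      · refine ⟨![M 1 1, -(M 1 0)], ?_, ?_, ?_⟩
        · intro hz
          have h1 := congrFun hz 0
          have h2 := congrFun hz 1
          simp at h1 h2
          exact hcd ⟨h2, h1⟩
        · simp only [Matrix.cons_val_zero, Matrix.cons_val_one, Matrix.head_cons]; linarith
        · simp only [Matrix.cons_val_zero, Matrix.cons_val_one, Matrix.head_cons]; ring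
    set u : Fin 2 → ℝ := ![-(1 + |v 0|), -(1 + |v 1|)] with hu
    refine ⟨fun i => M i 0 * u 0 + M i 1 * u 1,
      infinite_of_seg (fun t => fun j => u j + t * v j) _ ?_ ?_⟩
    · intro s _ t _ hst
      rcases (show v 0 ≠ 0 ∨ v 1 ≠ 0 by
        by_contra hcon
        push_neg at hcon
        exact hv0 (vec2_ext (by simp [hcon.1]) (by simp [hcon.2]))) with hj | hj
      · have h1 := congrFun hst 0
        simp only at h1
        have : s * v 0 = t * v 0 := by linarith
        exact mul_right_cancel₀ hj this
      · have h1 := congrFun hst 1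
        simp only at h1
        have : s * v 1 = t * v 1 := by linarith
        exact mul_right_cancel₀ hj this
    · intro t ht
      obtain ⟨ht0, ht1⟩ := ht
      have hneg : ∀ j : Fin 2, u j + t * v j ≤ 0 := by
        intro j
        have h1 : t * v j ≤ |v j| := by
          rcases le_or_gt 0 (v j) with hv | hv
          · nlinarith [le_abs_self (v j)]
          · nlinarith [neg_abs_le (v j), abs_nonneg (v j)]
        have h2 : u j = -(1 + |v j|) := by fin_cases j <;> simp [hu]
        rw [h2]; linarith
      have e0 := hneg 0
      have e1 := hneg 1
      have m0 : max (u 0 + t * v 0) 0 = 0 := max_eq_right e0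
      have m1 : max (u 1 + t * v 1) 0 = 0 := max_eq_right e1
      have m2 : max (-(u 0 + t * v 0)) 0 = -(u 0 + t * v 0) := max_eq_left (by linarith)
      have m3 : max (-(u 1 + t * v 1)) 0 = -(u 1 + t * v 1) := max_eq_left (by linarith)
      refine vec2_ext ?_ ?_ <;> rw [fpl_apply] <;> simp only [m0, m1, m2, m3]
      · nlinarith [hker0]
      · nlinarith [hker1]

lemma finite_fiber (N : Matrix (Fin 2) (Fin 2) ℝ)
    (ha : N 0 0 ≠ 0) (hd : N 1 1 ≠ 0) (hdet : N.det ≠ 0) (q : Fin 2 → ℝ) :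
    {x | fpl N x = q}.Finite := by
  rw [Matrix.det_fin_two] at hdet
  refine Set.Finite.subset (s := ({![q 0, q 1],
      ![q 0 / N 0 0, q 1 - N 1 0 * (q 0 / N 0 0)],
      ![q 0 - N 0 1 * (q 1 / N 1 1), q 1 / N 1 1],
      ![(N 1 1 * q 0 - N 0 1 * q 1) / (N 0 0 * N 1 1 - N 0 1 * N 1 0),
        (N 0 0 * q 1 - N 1 0 * q 0) / (N 0 0 * N 1 1 - N 0 1 * N 1 0)]} : Set (Fin 2 → ℝ)))
    ?_ ?_
  · apply Set.Finite.insert; apply Set.Finite.insert; apply Set.Finite.insert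
    exact Set.finite_singleton _
  intro x hx
  have h0 := congrFun hx 0
  have h1 := congrFun hx 1
  rw [fpl_apply] at h0 h1
  rcases le_or_gt 0 (x 0) with hx0 | hx0 <;> rcases le_or_gt 0 (x 1) with hx1 | hx1
  · rw [max_eq_left hx0, max_eq_right (by linarith : -x 0 ≤ 0),
        max_eq_right (by linarith : -x 1 ≤ 0)] at h0
    rw [max_eq_left hx1, max_eq_right (by linarith : -x 0 ≤ 0),
        max_eq_right (by linarith : -x 1 ≤ 0)] at h1
    left
    exact vec2_ext (by simpa using by linarith) (by simpa using by linarith)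
  · rw [max_eq_left hx0, max_eq_right (by linarith : -x 0 ≤ 0),
        max_eq_left (by linarith : (0:ℝ) ≤ -x 1)] at h0
    rw [max_eq_right (le_of_lt hx1), max_eq_right (by linarith : -x 0 ≤ 0),
        max_eq_left (by linarith : (0:ℝ) ≤ -x 1)] at h1
    right; right; left
    refine vec2_ext ?_ ?_
    · show x 0 = q 0 - N 0 1 * (q 1 / N 1 1)
      field_simp
      linear_combination (N 1 1) * h0 - (N 0 1) * h1
    · show x 1 = q 1 / N 1 1
      field_simp
      linear_combination h1
  · rw [max_eq_right (le_of_lt hx0), max_eq_left (by linarith : (0:ℝ) ≤ -x 0),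
        max_eq_right (by linarith : -x 1 ≤ 0)] at h0
    rw [max_eq_left hx1, max_eq_left (by linarith : (0:ℝ) ≤ -x 0),
        max_eq_right (by linarith : -x 1 ≤ 0)] at h1
    right; left
    refine vec2_ext ?_ ?_
    · show x 0 = q 0 / N 0 0
      field_simp
      linear_combination h0
    · show x 1 = q 1 - N 1 0 * (q 0 / N 0 0)
      field_simp
      linear_combination (N 0 0) * h1 - (N 1 0) * h0
  · rw [max_eq_right (le_of_lt hx0), max_eq_left (by linarith : (0:ℝ) ≤ -x 0),
        max_eq_left (by linarith : (0:ℝ) ≤ -x 1)] at h0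
    rw [max_eq_right (le_of_lt hx1), max_eq_left (by linarith : (0:ℝ) ≤ -x 0),
        max_eq_left (by linarith : (0:ℝ) ≤ -x 1)] at h1
    right; right; right
    refine vec2_ext ?_ ?_
    · show x 0 = (N 1 1 * q 0 - N 0 1 * q 1) / (N 0 0 * N 1 1 - N 0 1 * N 1 0)
      rw [eq_div_iff hdet]
      linear_combination (N 1 1) * h0 - (N 0 1) * h1
    · show x 1 = (N 0 0 * q 1 - N 1 0 * q 0) / (N 0 0 * N 1 1 - N 0 1 * N 1 0)
      rw [eq_div_iff hdet]
      linear_combination (N 0 0) * h1 - (N 1 0) * h0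

lemma perturb (M : Matrix (Fin 2) (Fin 2) ℝ) {ε : ℝ} (hε : 0 < ε) :
    ∃ N : Matrix (Fin 2) (Fin 2) ℝ, (∀ i j, |N i j - M i j| < ε) ∧
      N 0 0 ≠ 0 ∧ N 1 1 ≠ 0 ∧ N.det ≠ 0 := by
  have H : ∀ m : ℝ, ∃ a : ℝ, |a - m| < ε ∧ a ≠ 0 := by
    intro m
    by_cases h : m = 0
    · exact ⟨ε/2, by rw [h, sub_zero, abs_of_pos (by linarith)]; linarith, by positivity⟩
    · exact ⟨m, by simpa using hε, h⟩
  obtain ⟨a, haε, ha⟩ := H (M 0 0)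
  obtain ⟨d, hdε, hd⟩ := H (M 1 1)
  obtain ⟨c, hcε, hdet⟩ : ∃ c : ℝ, |c - M 1 0| < ε ∧ a * d - M 0 1 * c ≠ 0 := by
    by_cases h : a * d - M 0 1 * M 1 0 = 0
    · have hb : M 0 1 ≠ 0 := by
        intro hb0
        rw [hb0] at h
        exact mul_ne_zero ha hd (by linarith)
      refine ⟨M 1 0 + ε/2, by rw [add_sub_cancel_left, abs_of_pos (by linarith)]; linarith, ?_⟩
      intro hcon
      apply hb
      have h2 : M 0 1 * (ε/2) = 0 := by linarith
      rcases mul_eq_zero.mp h2 with h' | h'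
      · exact h'
      · linarith
    · exact ⟨M 1 0, by simpa using hε, h⟩
  refine ⟨Matrix.of ![![a, M 0 1], ![c, d]], ?_, ha, hd, ?_⟩
  · intro i j
    fin_cases i <;> fin_cases j
    · exact haε
    · show |M 0 1 - M 0 1| < ε; simpa using hε
    · exact hcε
    · exact hdε
  · rw [Matrix.det_fin_two]
    show a * d - M 0 1 * c ≠ 0
    exact hdet

theorem stmt_16 (M : Matrix (Fin 2) (Fin 2) ℝ)
    (h : M 0 0 = 0 ∨ M 1 1 = 0 ∨ M.det = 0) :
    ∀ ε > 0, ∃ N : Matrix (Fin 2) (Fin 2) ℝ,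
      (∀ i j, |N i j - M i j| < ε) ∧ ¬ LCPequiv M N := by
  intro ε hε
  obtain ⟨N, hclose, ha, hd, hdet⟩ := perturb M hε
  refine ⟨N, hclose, ?_⟩
  rintro ⟨φ, ψ, -, heq⟩
  obtain ⟨q, hinf⟩ := infinite_fiber M h
  have hfin := finite_fiber N ha hd hdet (φ.symm q)
  have hsub : ⇑ψ '' {x | fpl M x = q} ⊆ {y | fpl N y = φ.symm q} := by
    rintro _ ⟨x, hx, rfl⟩
    have hq : fpl M x = q := hx
    rw [heq] at hq
    simp only [Function.comp_apply] at hq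
    show fpl N (ψ x) = φ.symm q
    rw [← hq]
    exact (φ.symm_apply_apply _).symm
  have himg : (⇑ψ '' {x | fpl M x = q}).Infinite := hinf.image ψ.injective.injOn
  exact himg (hfin.subset hsub)
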